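/- Let (A,Q) be a finite quadratic module. Then for every x ∈ A one has S²𝔢_x = ((∑_{z∈A} e(−Q(z)))²/|A|)·𝔢_{−x}; equivalently, for every v ∈ ℂ[A] and a ∈ A, (S²v)(a) = ((∑_{z∈A} e(−Q(z)))²/|A|)·v(−a). Consequently S⁴ is the scalar operator ((∑_{z∈A} e(−Q(z)))²/|A|)²·id. -/

import Mathlib

open Finset

noncomputable def qe (q : AddCircle (1 : ℚ)) : ℂ :=
  Complex.exp (2 * (Real.pi : ℂ) * Complex.I * ((q.out : ℚ) : ℂ))

/-- `(A, Q)` is a finite quadratic module: `Q` is a nondegenerate quadratic form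
with values in `ℚ/ℤ`. -/
def IsFQM {A : Type*} [AddCommGroup A] (Q : A → AddCircle (1 : ℚ)) : Prop :=
  (∀ (n : ℤ) (x : A), Q (n • x) = n ^ 2 • Q x) ∧
  (∀ x x' y : A,
      Q (x + x' + y) - Q (x + x') - Q y =
        (Q (x + y) - Q x - Q y) + (Q (x' + y) - Q x' - Q y)) ∧
  (∀ x : A, (∀ y : A, Q (x + y) - Q x - Q y = 0) → x = 0)

/-- The standard basis vector `𝔢_x` of `ℂ[A]`. -/
noncomputable def indic {A : Type*} [DecidableEq A] (x : A) : A → ℂ :=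
  fun y => if y = x then 1 else 0

/-- The Weil representation operator `T`. -/
noncomputable def weilT {A : Type*} [AddCommGroup A] [Fintype A]
    (Q : A → AddCircle (1 : ℚ)) : (A → ℂ) →ₗ[ℂ] (A → ℂ) where
  toFun v := fun x => qe (Q x) * v x
  map_add' u v := by funext x; simp [mul_add]
  map_smul' c v := by funext x; simp [smul_eq_mul]; ring

/-- The Weil representation operator `S`. -/
noncomputable def weilS {A : Type*} [AddCommGroup A] [Fintype A]
    (Q : A → AddCircle (1 : ℚ)) : (A → ℂ) →ₗ[ℂ] (A → ℂ) where
  toFun v := fun y =>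
    ((Fintype.card A : ℂ)⁻¹ * ∑ z, qe (-(Q z))) *
      ∑ x, qe (-(Q (x + y) - Q x - Q y)) * v x
  map_add' u v := by
    funext y
    simp only [Pi.add_apply, mul_add, Finset.sum_add_distrib]
  map_smul' c v := by
    funext y
    simp only [Pi.smul_apply, smul_eq_mul, RingHom.id_apply, Finset.mul_sum]
    exact Finset.sum_congr rfl fun x _ => by ring

/-- The space of invariants of the Weil representation. -/
noncomputable def weilInv {A : Type*} [AddCommGroup A] [Fintype A]
    (Q : A → AddCircle (1 : ℚ)) : Submodule ℂ (A → ℂ) where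
  carrier := {v | weilS Q v = v ∧ weilT Q v = v}
  add_mem' := by
    rintro u v ⟨hu1, hu2⟩ ⟨hv1, hv2⟩
    exact ⟨by rw [map_add, hu1, hv1], by rw [map_add, hu2, hv2]⟩
  zero_mem' := ⟨map_zero _, map_zero _⟩
  smul_mem' := by
    rintro c v ⟨h1, h2⟩
    exact ⟨by rw [map_smul, h1], by rw [map_smul, h2]⟩

/-- `N` is the level of `(A,Q)`. -/
def IsLvl {A : Type*} [AddCommGroup A] (Q : A → AddCircle (1 : ℚ)) (N : ℕ) : Prop :=
  0 < N ∧ (∀ x, N • Q x = 0) ∧ ∀ M : ℕ, 0 < M → (∀ x, M • Q x = 0) → N ≤ M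

lemma qe_lift (r : ℚ) (q : AddCircle (1:ℚ)) (h : ((r : ℚ) : AddCircle (1:ℚ)) = q) :
    qe q = Complex.exp (2 * (Real.pi:ℂ) * Complex.I * (r:ℂ)) := by
  have hout : ((q.out : ℚ) : AddCircle (1:ℚ)) = q := QuotientAddGroup.out_eq' q
  have h2 : (((q.out : ℚ) - r : ℚ) : AddCircle (1:ℚ)) = 0 := by
    rw [QuotientAddGroup.mk_sub, hout, h, sub_self]
  obtain ⟨n, hn⟩ := (AddCircle.coe_eq_zero_iff _).mp h2
  rw [zsmul_eq_mul, mul_one] at hn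
  have hn' : (q.out : ℚ) = r + n := by linarith
  rw [qe, hn']
  push_cast
  rw [mul_add, Complex.exp_add]
  have : (2 * (Real.pi:ℂ) * Complex.I * (n:ℂ)) = (n:ℂ) * (2 * Real.pi * Complex.I) := by ring
  rw [this, Complex.exp_int_mul_two_pi_mul_I, mul_one]

lemma qe_add (p q : AddCircle (1:ℚ)) : qe (p + q) = qe p * qe q := by
  have := qe_lift ((p.out : ℚ) + (q.out : ℚ)) (p + q) (by
    rw [QuotientAddGroup.mk_add, QuotientAddGroup.out_eq', QuotientAddGroup.out_eq'])
  rw [this]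
  push_cast
  rw [mul_add, Complex.exp_add]
  rfl

lemma qe_zero : qe (0 : AddCircle (1:ℚ)) = 1 := by
  rw [qe_lift 0 0 (by norm_cast)]
  simp

lemma qe_eq_one_iff (q : AddCircle (1:ℚ)) : qe q = 1 ↔ q = 0 := by
  constructor
  · intro h
    rw [qe, Complex.exp_eq_one_iff] at h
    obtain ⟨n, hn⟩ := h
    have h2 : ((q.out : ℚ) : ℂ) = (n : ℂ) := by
      have hne : (2 * (Real.pi:ℂ) * Complex.I) ≠ 0 := by
        simp [Real.pi_ne_zero, Complex.I_ne_zero]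
      have : (2 * (Real.pi:ℂ) * Complex.I) * ((q.out : ℚ) : ℂ) =
          (2 * (Real.pi:ℂ) * Complex.I) * (n : ℂ) := by rw [hn]; ring
      exact mul_left_cancel₀ hne this
    have h3 : (q.out : ℚ) = (n : ℚ) := by exact_mod_cast h2
    rw [← QuotientAddGroup.out_eq' q, h3]
    rw [AddCircle.coe_eq_zero_iff]
    exact ⟨n, by rw [zsmul_eq_mul, mul_one]⟩
  · intro h; rw [h, qe_zero]


/-- `S² v (a) = ((∑ e(-Q(z)))²/|A|)·v(-a)` for all `v ∈ ℂ[A]`; consequently `S⁴` is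
the scalar operator `((∑ e(-Q(z)))²/|A|)²·id`. -/
theorem stmt8 {A : Type*} [AddCommGroup A] [Fintype A]
    (Q : A → AddCircle (1 : ℚ)) (hQ : IsFQM Q) :
    (∀ (v : A → ℂ) (a : A),
      weilS Q (weilS Q v) a = ((∑ z, qe (-(Q z))) ^ 2 / (Fintype.card A : ℂ)) * v (-a)) ∧
    ((weilS Q) ^ 4 : (A → ℂ) →ₗ[ℂ] (A → ℂ)) =
      ((∑ z, qe (-(Q z))) ^ 2 / (Fintype.card A : ℂ)) ^ 2 • LinearMap.id := by
  classical
  set B : A → A → AddCircle (1:ℚ) := fun x y => Q (x+y) - Q x - Q y with hB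
  have hBadd : ∀ x x' y, B (x+x') y = B x y + B x' y := hQ.2.1
  have hBsymm : ∀ x y, B x y = B y x := fun x y => by
    simp only [hB]
    rw [add_comm x y, sub_sub, sub_sub, add_comm (Q x) (Q y)]
  have hQ0 : Q 0 = 0 := by
    have h := hQ.1 0 0
    simpa using h
  have hcard : (Fintype.card A : ℂ) ≠ 0 := by
    exact_mod_cast Fintype.card_ne_zero
  have hkey : ∀ b : A, (∑ x, qe (-(B x b))) = if b = 0 then (Fintype.card A : ℂ) else 0 := by
    intro b
    by_cases hb : b = 0
    · subst hb
      rw [if_pos rfl]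
      have : ∀ x : A, B x 0 = 0 := fun x => by simp [hB, hQ0]
      simp [this, qe_zero]
    · rw [if_neg hb]
      obtain ⟨x₀, hx₀⟩ : ∃ x₀, B x₀ b ≠ 0 := by
        by_contra hcon
        push_neg at hcon
        apply hb
        apply hQ.2.2 b
        intro y
        show B b y = 0
        rw [hBsymm]
        exact hcon y
      have hrot : ∑ x, qe (-(B x b)) = ∑ x, qe (-(B (x₀ + x) b)) :=
        (Fintype.sum_equiv (Equiv.addLeft x₀) _ _ (fun x => rfl)).symm
      have h1 : qe (-(B x₀ b)) * ∑ x, qe (-(B x b)) = ∑ x, qe (-(B x b)) := by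
        rw [Finset.mul_sum, hrot]
        exact Finset.sum_congr rfl fun x _ => by rw [hBadd, neg_add, qe_add]
      have h2 : qe (-(B x₀ b)) ≠ 1 := by
        rw [Ne, qe_eq_one_iff, neg_eq_zero]; exact hx₀
      have h3 : (qe (-(B x₀ b)) - 1) * ∑ x, qe (-(B x b)) = 0 := by
        rw [sub_mul, h1, one_mul, sub_self]
      rcases mul_eq_zero.mp h3 with h | h
      · exact absurd (by linear_combination h : qe (-(B x₀ b)) = 1) h2
      · exact h
  set c : ℂ := (Fintype.card A : ℂ)⁻¹ * ∑ z, qe (-(Q z)) with hc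
  have main : ∀ (v : A → ℂ) (a : A),
      weilS Q (weilS Q v) a = ((∑ z, qe (-(Q z))) ^ 2 / (Fintype.card A : ℂ)) * v (-a) := by
    intro v a
    have step1 : weilS Q (weilS Q v) a
        = c * ∑ x, qe (-(B x a)) * (c * ∑ y, qe (-(B y x)) * v y) := rfl
    have step2 : ∀ x, qe (-(B x a)) * (c * ∑ y, qe (-(B y x)) * v y)
        = c * ∑ y, qe (-(B x (a + y))) * v y := by
      intro x
      rw [Finset.mul_sum, Finset.mul_sum, Finset.mul_sum]
      refine Finset.sum_congr rfl fun y _ => ?_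
      have hsplit : B x (a + y) = B x a + B x y := by
        rw [hBsymm x (a+y), hBadd, hBsymm a x, hBsymm y x]
      rw [hsplit, neg_add, qe_add, hBsymm y x]
      ring
    rw [step1]
    simp_rw [step2]
    rw [← Finset.mul_sum, Finset.sum_comm]
    have step3 : ∀ y, (∑ x, qe (-(B x (a + y))) * v y)
        = (if a + y = 0 then (Fintype.card A : ℂ) else 0) * v y := by
      intro y
      rw [← Finset.sum_mul, hkey]
    simp_rw [step3]
    have step4 : (∑ y, (if a + y = 0 then (Fintype.card A : ℂ) else 0) * v y)
        = (Fintype.card A : ℂ) * v (-a) := by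
      rw [Finset.sum_eq_single (-a)]
      · simp
      · intro y _ hy
        rw [if_neg (fun h => hy (eq_neg_of_add_eq_zero_right h)), zero_mul]
      · intro h; exact absurd (Finset.mem_univ _) h
    rw [step4, hc]
    field_simp
  refine ⟨main, ?_⟩
  refine LinearMap.ext fun v => funext fun a => ?_
  have hpow : ((weilS Q) ^ 4 : (A → ℂ) →ₗ[ℂ] (A → ℂ)) v
      = weilS Q (weilS Q (weilS Q (weilS Q v))) := by
    simp [pow_succ, Module.End.mul_apply]
  rw [hpow]
  rw [main (weilS Q (weilS Q v)) a, main v (-a), neg_neg]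
  simp [smul_eq_mul]
  ring
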